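/- Let n > 0 be a real number, let T > 2 and R > 0, and set σ² := (e^{2T} − 1)/(2n). Then the Gaussian probability measure on ℝ with mean 0 and variance σ² assigns to the interval [−R, R] mass at most (3·R·√(2n)/√(2π))·e^{−T}. -/

import Mathlib

open MeasureTheory ProbabilityTheory

/-- Gaussian small-ball estimate from Lemma 3.4: the centered Gaussian of variance
`(e^{2T} - 1)/(2n)` assigns to `[-R, R]` mass at most `(3 R √(2n)/√(2π)) e^{-T}`. -/
theorem gaussian_small_ball
    (n T R : ℝ) (hn : 0 < n) (hT : 2 < T) (hR : 0 < R) :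
    gaussianReal 0 (((Real.exp (2 * T) - 1) / (2 * n)).toNNReal) (Set.Icc (-R) R)
      ≤ ENNReal.ofReal (3 * R * Real.sqrt (2 * n) / Real.sqrt (2 * Real.pi) * Real.exp (-T)) := by
  have hpi := Real.pi_pos
  set a : ℝ := (Real.exp (2 * T) - 1) / (2 * n) with ha
  have hexp : (1 : ℝ) < Real.exp (2 * T) := by
    rw [show (1:ℝ) = Real.exp 0 by simp]
    exact Real.exp_lt_exp.mpr (by linarith)
  have ha_pos : 0 < a := div_pos (by linarith) (by linarith)
  set v : NNReal := a.toNNReal with hv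
  have hv0 : v ≠ 0 := by
    simp [hv, Real.toNNReal_pos.mpr ha_pos, ne_of_gt]
  have hvr : (v : ℝ) = a := Real.coe_toNNReal _ ha_pos.le
  -- pointwise bound on the pdf
  have hpdf : ∀ x : ℝ, gaussianPDF 0 v x ≤ ENNReal.ofReal ((Real.sqrt (2 * Real.pi * v))⁻¹) := by
    intro x
    rw [gaussianPDF]
    apply ENNReal.ofReal_le_ofReal
    rw [gaussianPDFReal]
    have h1 : Real.exp (-(x - 0) ^ 2 / (2 * v)) ≤ 1 := by
      apply Real.exp_le_one_iff.mpr
      apply div_nonpos_of_nonpos_of_nonneg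
      · simp [sq_nonneg]
      · positivity
    calc (Real.sqrt (2 * Real.pi * v))⁻¹ * Real.exp (-(x - 0) ^ 2 / (2 * v))
        ≤ (Real.sqrt (2 * Real.pi * v))⁻¹ * 1 := by
          apply mul_le_mul_of_nonneg_left h1 (by positivity)
      _ = (Real.sqrt (2 * Real.pi * v))⁻¹ := mul_one _
  have hmeas : gaussianReal 0 v (Set.Icc (-R) R)
      ≤ ENNReal.ofReal ((Real.sqrt (2 * Real.pi * v))⁻¹) * ENNReal.ofReal (2 * R) := by
    rw [gaussianReal_apply 0 hv0]
    calc ∫⁻ x in Set.Icc (-R) R, gaussianPDF 0 v x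
        ≤ ∫⁻ _ in Set.Icc (-R) R, ENNReal.ofReal ((Real.sqrt (2 * Real.pi * v))⁻¹) :=
          lintegral_mono fun x => hpdf x
      _ = ENNReal.ofReal ((Real.sqrt (2 * Real.pi * v))⁻¹) * volume (Set.Icc (-R) R) := by
          rw [setLIntegral_const]
      _ = ENNReal.ofReal ((Real.sqrt (2 * Real.pi * v))⁻¹) * ENNReal.ofReal (2 * R) := by
          rw [Real.volume_Icc]
          ring_nf
  refine hmeas.trans ?_
  rw [← ENNReal.ofReal_mul (by positivity)]
  apply ENNReal.ofReal_le_ofReal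
  rw [hvr]
  -- now pure real arithmetic
  have hsqrt_a : Real.sqrt a = Real.sqrt (Real.exp (2 * T) - 1) / Real.sqrt (2 * n) := by
    rw [ha]; exact Real.sqrt_div (by linarith) _
  have h2pia : Real.sqrt (2 * Real.pi * a) = Real.sqrt (2 * Real.pi) * Real.sqrt a :=
    Real.sqrt_mul (by positivity) _
  rw [h2pia, hsqrt_a]
  have hE : Real.sqrt (Real.exp (2 * T) - 1) > 0 := Real.sqrt_pos.mpr (by linarith)
  have key : 2 * Real.exp T ≤ 3 * Real.sqrt (Real.exp (2 * T) - 1) := by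
    have h9 : (9 : ℝ) < 5 * Real.exp (2 * T) := by
      have he : (7.38 : ℝ) < Real.exp 2 := by
        have h1 := Real.exp_one_gt_d9
        have h2 : Real.exp 2 = Real.exp 1 * Real.exp 1 := by
          rw [← Real.exp_add]; norm_num
        nlinarith
      have h4 : Real.exp 2 ≤ Real.exp (2 * T) := Real.exp_le_exp.mpr (by linarith)
      nlinarith
    have hsq : (2 * Real.exp T) ^ 2 ≤ (3 * Real.sqrt (Real.exp (2 * T) - 1)) ^ 2 := by
      rw [mul_pow, mul_pow, Real.sq_sqrt (by linarith)]
      have : Real.exp T ^ 2 = Real.exp (2 * T) := by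
        rw [← Real.exp_nat_mul]; norm_num [two_mul, Real.exp_add]
      nlinarith [Real.exp_pos T]
    have h5 := Real.sqrt_le_sqrt hsq
    rwa [Real.sqrt_sq (by positivity), Real.sqrt_sq (by positivity)] at h5
  have hET : Real.exp T * Real.exp (-T) = 1 := by
    rw [← Real.exp_add]; simp
  have h2n : 0 < Real.sqrt (2 * n) := Real.sqrt_pos.mpr (by linarith)
  have h2pi : 0 < Real.sqrt (2 * Real.pi) := Real.sqrt_pos.mpr (by positivity)
  rw [inv_mul_le_iff₀ (by positivity)]
  have hexpT : 0 < Real.exp (-T) := Real.exp_pos _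
  have hrhs : Real.sqrt (2 * Real.pi) * (Real.sqrt (Real.exp (2 * T) - 1) / Real.sqrt (2 * n)) *
      (3 * R * Real.sqrt (2 * n) / Real.sqrt (2 * Real.pi) * Real.exp (-T))
      = 3 * R * Real.exp (-T) * Real.sqrt (Real.exp (2 * T) - 1) := by
    field_simp
  rw [hrhs]
  nlinarith [mul_le_mul_of_nonneg_left key (by positivity : (0:ℝ) ≤ R * Real.exp (-T))]
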